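/- Let m be a discrete m-function whose continued fraction coefficients form a p-periodic pair ((a_j),(b_j)) that is doubly palindromic with period p and first length ℓ, with stripping sequence (m_n)_{n≥0}. Let m⁻ be the discrete m-function whose continued fraction coefficients are p-periodic with one period (a_{p−1},b_p), (a_{p−2},b_{p−1}),…,(a_1,b_2), (a_p,b_1). Then m⁻(z) = m_{ℓ+1}(z) for all z ∈ ℂ₊; consequently m⁻(z) = (p_{ℓ+1}(z)m(z) + q_{ℓ+1}(z)) / (−a_{ℓ+1}(p_ℓ(z)m(z) + q_ℓ(z))) for all z ∈ ℂ₊, where p_{ℓ+1}(z) = p_{ℓ+1}(z;{a_j,b_j}_{j=1}^{ℓ+1}) and similarly for q_{ℓ+1}, p_ℓ, q_ℓ. -/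

import Mathlib

open MeasureTheory Polynomial Filter

noncomputable section

/-- A discrete m-function: the Cauchy transform of a compactly supported
probability measure on `ℝ`, viewed as a function on the upper half plane
`ℂ₊ = {z : 0 < z.im}`. -/
def IsDiscreteMFunction (m : ℂ → ℂ) : Prop :=
  ∃ ρ : Measure ℝ, IsProbabilityMeasure ρ ∧ (∃ t : ℝ, ρ (Set.Icc (-t) t) = 1) ∧
    ∀ z : ℂ, 0 < z.im → m z = ∫ x : ℝ, ((x : ℂ) - z)⁻¹ ∂ρ

/-- `m` has continued fraction (Jacobi) coefficients `{(a n, b n)}_{n ≥ 1}`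
(sequences indexed from 1; index 0 unused) with stripping sequence `ms`. -/
def HasJacobiCoeffs (m : ℂ → ℂ) (a b : ℕ → ℝ) (ms : ℕ → ℂ → ℂ) : Prop :=
  ms 0 = m ∧ (∀ n, IsDiscreteMFunction (ms n)) ∧
    ∀ n, ∀ z : ℂ, 0 < z.im →
      ms n z = ((b (n + 1) : ℂ) - z - (a (n + 1) : ℂ) ^ 2 * ms (n + 1) z)⁻¹

/-- Shifted first-kind polynomials: `pShift a b (j+1) = p_j(·; {a_i, b_i}_{i=1}^j)`,
so `pShift a b 0 = p₋₁ = 0`, `pShift a b 1 = p₀ = 1`, and the recurrence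
`z p_j = a_{j+1} p_{j+1} + b_{j+1} p_j + a_j p_{j-1}` holds. -/
def pShift (a b : ℕ → ℝ) : ℕ → ℂ → ℂ
  | 0 => fun _ => 0
  | 1 => fun _ => 1
  | (n + 2) => fun z =>
      ((z - (b (n + 1) : ℂ)) * pShift a b (n + 1) z - (a n : ℂ) * pShift a b n z) /
        (a (n + 1) : ℂ)

/-- The first-kind polynomial `p_n(z; {a_j, b_j}_{j=1}^n)`. -/
def firstKind (a b : ℕ → ℝ) (n : ℕ) : ℂ → ℂ := pShift a b (n + 1)

/-- The second-kind polynomial `q_n(z; {a_j, b_j}_{j=1}^n) = a₁⁻¹ p_{n-1}(z; {a_j, b_j}_{j=2}^n)`,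
with `q₀ = 0`. -/
def secondKind (a b : ℕ → ℝ) (n : ℕ) : ℂ → ℂ :=
  fun z => ((a 1 : ℂ))⁻¹ * pShift (fun j => a (j + 1)) (fun j => b (j + 1)) n z

/-- The conjugated transfer matrix `T_n = [[p_n, q_n], [-a_n p_{n-1}, -a_n q_{n-1}]]`
of the parameters `(a_j, b_j)_{j=1}^n`. -/
def ctm (a b : ℕ → ℝ) (n : ℕ) : Matrix (Fin 2) (Fin 2) (ℂ → ℂ) :=
  !![firstKind a b n, secondKind a b n;
     (fun z => -(a n : ℂ) * firstKind a b (n - 1) z),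
     (fun z => -(a n : ℂ) * secondKind a b (n - 1) z)]

/-- The finite string `(s (start+1), …, s (start+len))` is a palindrome. -/
def PalSeg {α : Type*} (s : ℕ → α) (start len : ℕ) : Prop :=
  ∀ i, 1 ≤ i → i ≤ len → s (start + i) = s (start + (len + 1 - i))

/-- The pair of `p`-periodic sequences `(a, b)` is doubly palindromic with period `p`
and first length `ℓ` (`1 ≤ ℓ ≤ p - 2`): `(a₁,…,a_ℓ)` and `(a_{ℓ+1},…,a_p)` are palindromes,
and `(b₁,…,b_{ℓ+1})` and `(b_{ℓ+2},…,b_p)` are palindromes. -/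
def DoublyPalindromic (a b : ℕ → ℝ) (p ℓ : ℕ) : Prop :=
  1 ≤ ℓ ∧ ℓ + 2 ≤ p ∧
    PalSeg a 0 ℓ ∧ PalSeg a ℓ (p - ℓ) ∧
    PalSeg b 0 (ℓ + 1) ∧ PalSeg b (ℓ + 1) (p - (ℓ + 1))

namespace RevStrip

lemma integrand_ne (z : ℂ) (hz : 0 < z.im) (x : ℝ) : ((x:ℂ) - z) ≠ 0 := by
  intro h
  have : ((x:ℂ) - z).im = 0 := by rw [h]; simp
  simp at this
  linarith

lemma integrand_cont (z : ℂ) (hz : 0 < z.im) :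
    Continuous (fun x : ℝ => ((x:ℂ) - z)⁻¹) := by
  refine Continuous.inv₀ (by continuity) (integrand_ne z hz)

lemma norm_integrand_le (z : ℂ) (hz : 0 < z.im) (x : ℝ) : ‖((x:ℂ) - z)⁻¹‖ ≤ (z.im)⁻¹ := by
  rw [norm_inv]
  have h1 : z.im ≤ ‖(x:ℂ) - z‖ := by
    have := Complex.abs_im_le_norm ((x:ℂ) - z)
    simp only [Complex.sub_im, Complex.ofReal_im, zero_sub, abs_neg] at this
    exact (le_abs_self z.im).trans this
  exact inv_anti₀ hz h1

lemma dm_props {f : ℂ → ℂ} (hf : IsDiscreteMFunction f) {z : ℂ} (hz : 0 < z.im) :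
    ‖f z‖ ≤ (z.im)⁻¹ ∧ 0 ≤ (f z).im := by
  obtain ⟨ρ, hρ, -, hrep⟩ := hf
  haveI := hρ
  have hmeas : AEStronglyMeasurable (fun x : ℝ => ((x:ℂ) - z)⁻¹) ρ :=
    (integrand_cont z hz).aestronglyMeasurable
  have hint : Integrable (fun x : ℝ => ((x:ℂ) - z)⁻¹) ρ :=
    (integrable_const ((z.im)⁻¹)).mono' hmeas
      (Eventually.of_forall fun x => norm_integrand_le z hz x)
  rw [hrep z hz]
  constructor
  · have := norm_integral_le_of_norm_le_const (μ := ρ)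
      (Eventually.of_forall (norm_integrand_le z hz))
    simpa using this
  · have him := integral_im (μ := ρ) (f := fun x : ℝ => ((x:ℂ) - z)⁻¹) hint
    simp only [RCLike.im_to_complex] at him
    rw [← him]
    apply integral_nonneg
    intro x
    show (0:ℝ) ≤ (((x:ℂ) - z)⁻¹).im
    have h2 : ((((x:ℂ) - z))⁻¹).im = -((x:ℂ) - z).im / Complex.normSq ((x:ℂ) - z) :=
      Complex.inv_im _
    rw [h2]
    have : ((x:ℂ) - z).im = -z.im := by simp
    rw [this, neg_neg]
    exact div_nonneg hz.le (Complex.normSq_nonneg _)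


lemma im_lower {z₀ z : ℂ} {ε : ℝ} (hball : z ∈ Metric.ball z₀ ε) : z₀.im - ε < z.im := by
  have h1 : |z.im - z₀.im| ≤ ‖z - z₀‖ := by
    have := Complex.abs_im_le_norm (z - z₀)
    simpa using this
  have h2 : ‖z - z₀‖ < ε := by rwa [Metric.mem_ball, dist_eq_norm] at hball
  have := abs_lt.mp (lt_of_le_of_lt h1 h2)
  linarith

lemma dm_analytic {f : ℂ → ℂ} (hf : IsDiscreteMFunction f) :
    AnalyticOnNhd ℂ f {z : ℂ | 0 < z.im} := by
  obtain ⟨ρ, hρ, -, hrep⟩ := hf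
  haveI := hρ
  have hopen : IsOpen {z : ℂ | 0 < z.im} := isOpen_lt continuous_const Complex.continuous_im
  have hdiff : DifferentiableOn ℂ (fun z => ∫ x : ℝ, ((x:ℂ) - z)⁻¹ ∂ρ) {z : ℂ | 0 < z.im} := by
    intro z₀ hz₀
    apply DifferentiableAt.differentiableWithinAt
    have hz₀ : (0:ℝ) < z₀.im := hz₀
    set ε := z₀.im / 2 with hεdef
    have hε : (0:ℝ) < ε := by positivity
    have hball_im : ∀ z ∈ Metric.ball z₀ ε, (0:ℝ) < z.im ∧ ε ≤ z.im := by
      intro z hzb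
      have := im_lower hzb
      constructor <;> [linarith; linarith]
    have key := hasDerivAt_integral_of_dominated_loc_of_deriv_le (μ := ρ)
      (F := fun z (x:ℝ) => ((x:ℂ) - z)⁻¹)
      (F' := fun z (x:ℝ) => (((x:ℂ) - z)^2)⁻¹) (x₀ := z₀)
      (bound := fun _ => (ε^2)⁻¹) (Metric.ball_mem_nhds z₀ hε)
      (Eventually.of_forall fun z =>
        (((Complex.measurable_ofReal.sub measurable_const).inv).aestronglyMeasurable))
      ?_ ?_ ?_ (integrable_const _) ?_
    · exact key.2.differentiableAt
    · -- integrability at z₀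
      refine (integrable_const ((z₀.im)⁻¹)).mono'
        (((Complex.measurable_ofReal.sub measurable_const).inv).aestronglyMeasurable)
        (Eventually.of_forall fun x => ?_)
      rw [norm_inv]
      refine inv_anti₀ hz₀ ?_
      have := Complex.abs_im_le_norm ((x:ℂ) - z₀)
      simp only [Complex.sub_im, Complex.ofReal_im, zero_sub, abs_neg] at this
      exact (le_abs_self z₀.im).trans this
    · exact (((Complex.measurable_ofReal.sub measurable_const).pow_const 2).inv).aestronglyMeasurable
    · -- bound
      refine Eventually.of_forall fun x => fun z hzb => ?_
      obtain ⟨h1, h2⟩ := hball_im z hzb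
      rw [norm_inv]
      refine inv_anti₀ (by positivity) ?_
      have him : z.im ≤ ‖(x:ℂ) - z‖ := by
        have := Complex.abs_im_le_norm ((x:ℂ) - z)
        simp only [Complex.sub_im, Complex.ofReal_im, zero_sub, abs_neg] at this
        exact (le_abs_self z.im).trans this
      calc ε^2 ≤ z.im^2 := by nlinarith
        _ ≤ ‖(x:ℂ) - z‖^2 := by nlinarith [norm_nonneg ((x:ℂ) - z)]
        _ = ‖((x:ℂ) - z)^2‖ := by rw [norm_pow]
    · -- differentiability
      refine Eventually.of_forall fun x => fun z hzb => ?_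
      have hne : ((x:ℂ) - z) ≠ 0 := integrand_ne z (hball_im z hzb).1 x
      have hc : HasDerivAt (fun w : ℂ => (x:ℂ) - w) (-1) z := by
        simpa using (hasDerivAt_id z).const_sub (x:ℂ)
      have := hc.inv hne
      simp only [neg_neg, one_div] at this
      exact this
  have := hdiff.analyticOnNhd hopen
  exact this.congr hopen (fun z hz => (hrep z hz).symm)

lemma denom_ne {a b : ℝ} {z w : ℂ} (hz : 0 < z.im) (hw : 0 ≤ w.im) :
    ((b : ℂ) - z - (a : ℂ)^2 * w) ≠ 0 := by
  intro h
  have him : ((b : ℂ) - z - (a : ℂ)^2 * w).im = -z.im - a^2 * w.im := by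
    simp [Complex.sub_im, Complex.mul_im, Complex.ofReal_im, Complex.ofReal_re, pow_two]
    try ring
  rw [h] at him
  simp only [Complex.zero_im] at him
  nlinarith [sq_nonneg a]

lemma eq_of_same_coeffs (m1 m2 : ℂ → ℂ) (af bf : ℕ → ℝ) (ms1 ms2 : ℕ → ℂ → ℂ)
    (h1 : HasJacobiCoeffs m1 af bf ms1) (h2 : HasJacobiCoeffs m2 af bf ms2)
    (S : ℝ) (hS : 0 < S) (hbound : ∀ j, 1 ≤ j → 0 < af j ∧ af j ≤ S) :
    ∀ z : ℂ, 0 < z.im → m1 z = m2 z := by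
  set q : ℝ := (S / (S + 1))^2 with hqdef
  have hq0 : 0 ≤ q := sq_nonneg _
  have hq1 : q < 1 := by
    rw [hqdef]
    have : S / (S+1) < 1 := by
      rw [div_lt_one (by linarith)]; linarith
    nlinarith [div_nonneg hS.le (by linarith : (0:ℝ) ≤ S + 1)]
  -- equality on the high strip
  have key : ∀ z : ℂ, S + 1 ≤ z.im → m1 z = m2 z := by
    intro z hzS
    have hz : 0 < z.im := by linarith
    have hnormle : ∀ (n : ℕ), ‖ms1 n z - ms2 n z‖ ≤ 2 := by
      intro n
      have b1 := (dm_props (h1.2.1 n) hz).1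
      have b2 := (dm_props (h2.2.1 n) hz).1
      have : (z.im)⁻¹ ≤ 1 := by
        rw [inv_le_one_iff₀]; right; linarith
      calc ‖ms1 n z - ms2 n z‖ ≤ ‖ms1 n z‖ + ‖ms2 n z‖ := norm_sub_le _ _
        _ ≤ (z.im)⁻¹ + (z.im)⁻¹ := add_le_add b1 b2
        _ ≤ 2 := by linarith
    have step : ∀ n : ℕ, ‖ms1 n z - ms2 n z‖ ≤ q * ‖ms1 (n+1) z - ms2 (n+1) z‖ := by
      intro n
      have hab := hbound (n+1) (by omega)
      set α : ℝ := af (n+1)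
      set β : ℝ := bf (n+1)
      have hA : ((β : ℂ) - z - (α : ℂ)^2 * ms1 (n+1) z) ≠ 0 :=
        denom_ne hz (dm_props (h1.2.1 (n+1)) hz).2
      have hB : ((β : ℂ) - z - (α : ℂ)^2 * ms2 (n+1) z) ≠ 0 :=
        denom_ne hz (dm_props (h2.2.1 (n+1)) hz).2
      have e1 := h1.2.2 n z hz
      have e2 := h2.2.2 n z hz
      have hident : ms1 n z - ms2 n z =
          (α:ℂ)^2 * (ms1 (n+1) z - ms2 (n+1) z) * (ms1 n z) * (ms2 n z) := by
        have hA' : (bf (n+1) : ℂ) - z - (af (n+1) : ℂ)^2 * ms1 (n+1) z ≠ 0 := hA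
        have hB' : (bf (n+1) : ℂ) - z - (af (n+1) : ℂ)^2 * ms2 (n+1) z ≠ 0 := hB
        rw [e1, e2]
        field_simp
        ring
      rw [hident]
      have n1 : ‖ms1 n z‖ ≤ (S+1)⁻¹ := by
        refine le_trans (dm_props (h1.2.1 n) hz).1 ?_
        exact inv_anti₀ (by linarith) hzS
      have n2 : ‖ms2 n z‖ ≤ (S+1)⁻¹ := by
        refine le_trans (dm_props (h2.2.1 n) hz).1 ?_
        exact inv_anti₀ (by linarith) hzS
      have hα2 : ‖((α:ℂ))^2‖ ≤ S^2 := by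
        rw [norm_pow, Complex.norm_real, Real.norm_eq_abs, abs_of_pos hab.1]
        nlinarith [hab.1, hab.2]
      calc ‖(α:ℂ)^2 * (ms1 (n+1) z - ms2 (n+1) z) * (ms1 n z) * (ms2 n z)‖
          = ‖((α:ℂ))^2‖ * ‖ms1 (n+1) z - ms2 (n+1) z‖ * ‖ms1 n z‖ * ‖ms2 n z‖ := by
            simp [norm_mul]
        _ ≤ S^2 * ‖ms1 (n+1) z - ms2 (n+1) z‖ * (S+1)⁻¹ * (S+1)⁻¹ := by
            have t1 : ‖((α:ℂ))^2‖ * ‖ms1 (n+1) z - ms2 (n+1) z‖ ≤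
                S^2 * ‖ms1 (n+1) z - ms2 (n+1) z‖ :=
              mul_le_mul_of_nonneg_right hα2 (norm_nonneg _)
            have t2 := mul_le_mul t1 n1 (norm_nonneg _) (by positivity)
            exact mul_le_mul t2 n2 (norm_nonneg _) (by positivity)
        _ = q * ‖ms1 (n+1) z - ms2 (n+1) z‖ := by
            rw [hqdef, div_eq_mul_inv]; ring
    have iter : ∀ n : ℕ, ‖ms1 0 z - ms2 0 z‖ ≤ q^n * ‖ms1 n z - ms2 n z‖ := by
      intro n
      induction n with
      | zero => simp
      | succ k ih =>
        calc ‖ms1 0 z - ms2 0 z‖ ≤ q^k * ‖ms1 k z - ms2 k z‖ := ih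
          _ ≤ q^k * (q * ‖ms1 (k+1) z - ms2 (k+1) z‖) := by
              apply mul_le_mul_of_nonneg_left (step k) (pow_nonneg hq0 k)
          _ = q^(k+1) * ‖ms1 (k+1) z - ms2 (k+1) z‖ := by ring
    have hfinal : ‖ms1 0 z - ms2 0 z‖ ≤ 0 := by
      have hub : ∀ n : ℕ, ‖ms1 0 z - ms2 0 z‖ ≤ q^n * 2 := by
        intro n
        refine le_trans (iter n) ?_
        exact mul_le_mul_of_nonneg_left (hnormle n) (pow_nonneg hq0 n)
      have htend : Tendsto (fun n : ℕ => q^n * 2) atTop (nhds 0) := by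
        have := tendsto_pow_atTop_nhds_zero_of_lt_one hq0 hq1
        simpa using this.mul_const 2
      exact ge_of_tendsto' htend hub
    have : ms1 0 z = ms2 0 z := by
      have := norm_le_zero_iff.mp hfinal
      exact sub_eq_zero.mp this
    rw [← h1.1, ← h2.1]
    exact this
  -- analytic continuation
  intro z hz
  have ha1 : AnalyticOnNhd ℂ m1 {w : ℂ | 0 < w.im} := by
    have := dm_analytic (h1.2.1 0); rwa [h1.1] at this
  have ha2 : AnalyticOnNhd ℂ m2 {w : ℂ | 0 < w.im} := by
    have := dm_analytic (h2.2.1 0); rwa [h2.1] at this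
  have hpre : IsPreconnected {w : ℂ | 0 < w.im} :=
    (convex_halfSpace_im_gt 0).isPreconnected
  set z₀ : ℂ := (S + 2 : ℝ) * Complex.I with hz₀def
  have hz₀im : z₀.im = S + 2 := by simp [hz₀def]
  have hz₀U : z₀ ∈ {w : ℂ | 0 < w.im} := by
    simp only [Set.mem_setOf_eq, hz₀im]; linarith
  have hVopen : IsOpen {w : ℂ | S + 1 < w.im} := isOpen_lt continuous_const Complex.continuous_im
  have hz₀V : z₀ ∈ {w : ℂ | S + 1 < w.im} := by
    simp only [Set.mem_setOf_eq, hz₀im]; linarith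
  have hev : m1 =ᶠ[nhds z₀] m2 :=
    eventually_of_mem (hVopen.mem_nhds hz₀V) (fun w hw => key w (le_of_lt hw))
  exact ha1.eqOn_of_preconnected_of_eventuallyEq ha2 hpre hz₀U hev hz


lemma firstKind_rec (a b : ℕ → ℝ) (n : ℕ) (z : ℂ) :
    firstKind a b (n+2) z = ((z - (b (n+2) : ℂ)) * firstKind a b (n+1) z
      - (a (n+1) : ℂ) * firstKind a b n z) / (a (n+2) : ℂ) := by
  show pShift a b (n+3) z = _
  rw [show n + 3 = (n+1) + 2 by ring]
  rfl

lemma secondKind_rec (a b : ℕ → ℝ) (n : ℕ) (z : ℂ) :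
    secondKind a b (n+2) z = ((z - (b (n+2) : ℂ)) * secondKind a b (n+1) z
      - (a (n+1) : ℂ) * secondKind a b n z) / (a (n+2) : ℂ) := by
  show ((a 1 : ℂ))⁻¹ * pShift _ _ (n+2) z = _
  rw [show pShift (fun j => a (j + 1)) (fun j => b (j + 1)) (n+2) z
      = ((z - (b (n+2) : ℂ)) * pShift (fun j => a (j + 1)) (fun j => b (j + 1)) (n+1) z
        - (a (n+1) : ℂ) * pShift (fun j => a (j + 1)) (fun j => b (j + 1)) n z) / (a (n+2) : ℂ)
    from rfl]
  unfold secondKind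
  ring

/-- The Möbius relation between `m` and its strips. -/
lemma mobius (m : ℂ → ℂ) (a b : ℕ → ℝ) (ms : ℕ → ℂ → ℂ)
    (hapos : ∀ j, 1 ≤ j → 0 < a j)
    (hcoef : HasJacobiCoeffs m a b ms) (z : ℂ) (hz : 0 < z.im) (n : ℕ) :
    (firstKind a b n z * m z + secondKind a b n z ≠ 0) ∧
    firstKind a b (n+1) z * m z + secondKind a b (n+1) z
      = ms (n+1) z * (-(a (n+1) : ℂ) * (firstKind a b n z * m z + secondKind a b n z)) := by
  have haC : ∀ j, 1 ≤ j → (a j : ℂ) ≠ 0 := fun j hj =>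
    Complex.ofReal_ne_zero.mpr (ne_of_gt (hapos j hj))
  have hXne : ∀ k : ℕ, ((b (k+1) : ℂ) - z - (a (k+1) : ℂ)^2 * ms (k+1) z) ≠ 0 :=
    fun k => denom_ne hz (dm_props (hcoef.2.1 (k+1)) hz).2
  have hmsne : ∀ k : ℕ, ms k z ≠ 0 := by
    intro k
    rw [hcoef.2.2 k z hz]
    exact inv_ne_zero (hXne k)
  have hm0 : m z = ms 0 z := by rw [hcoef.1]
  induction n with
  | zero =>
    constructor
    · have : firstKind a b 0 z * m z + secondKind a b 0 z = m z := by
        simp [firstKind, secondKind, pShift]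
      rw [this, hm0]; exact hmsne 0
    · have e0 := hcoef.2.2 0 z hz
      have h1 : firstKind a b 1 z = (z - (b 1 : ℂ)) / (a 1 : ℂ) := by
        simp [firstKind, pShift]
      have h2 : secondKind a b 1 z = ((a 1 : ℂ))⁻¹ := by
        simp [secondKind, pShift]
      have h3 : firstKind a b 0 z = 1 := by simp [firstKind, pShift]
      have h4 : secondKind a b 0 z = 0 := by simp [secondKind, pShift]
      rw [h1, h2, h3, h4, hm0, e0]
      field_simp [hXne 0, haC 1 le_rfl]
      ring
  | succ k ih =>
    obtain ⟨hPk, hPk1⟩ := ih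
    have hPk1ne : firstKind a b (k+1) z * m z + secondKind a b (k+1) z ≠ 0 := by
      rw [hPk1]
      exact mul_ne_zero (hmsne (k+1))
        (mul_ne_zero (neg_ne_zero.mpr (haC (k+1) (by omega))) hPk)
    refine ⟨hPk1ne, ?_⟩
    have hrec : firstKind a b (k+2) z * m z + secondKind a b (k+2) z
        = ((z - (b (k+2) : ℂ)) * (firstKind a b (k+1) z * m z + secondKind a b (k+1) z)
          - (a (k+1) : ℂ) * (firstKind a b k z * m z + secondKind a b k z)) / (a (k+2) : ℂ) := by
      rw [firstKind_rec, secondKind_rec]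
      ring
    have estrip := hcoef.2.2 (k+1) z hz
    rw [hrec, hPk1, estrip]
    field_simp [hXne (k+1), haC (k+1) (by omega : 1 ≤ k+1), haC (k+2) (by omega : 1 ≤ k+2)]
    ring


lemma coeff_eq (a b am bm : ℕ → ℝ) (p ℓ : ℕ)
    (hℓ1 : 1 ≤ ℓ) (hℓp : ℓ + 2 ≤ p)
    (haper : ∀ j, 1 ≤ j → a (j + p) = a j)
    (hbper : ∀ j, 1 ≤ j → b (j + p) = b j)
    (hP1a : PalSeg a 0 ℓ) (hP2a : PalSeg a ℓ (p - ℓ))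
    (hP1b : PalSeg b 0 (ℓ + 1)) (hP2b : PalSeg b (ℓ + 1) (p - (ℓ + 1)))
    (hamper : ∀ j, 1 ≤ j → am (j + p) = am j)
    (hbmper : ∀ j, 1 ≤ j → bm (j + p) = bm j)
    (ham : ∀ j, 1 ≤ j → j ≤ p - 1 → am j = a (p - j))
    (hamp : am p = a p)
    (hbm : ∀ j, 1 ≤ j → j ≤ p → bm j = b (p + 1 - j)) :
    ∀ j, 1 ≤ j → am j = a (ℓ + 1 + j) ∧ bm j = b (ℓ + 1 + j) := by
  have ea : ∀ x y : ℕ, x = y → a x = a y := fun x y h => by rw [h]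
  have eb : ∀ x y : ℕ, x = y → b x = b y := fun x y h => by rw [h]
  have hA1 : ∀ i, 1 ≤ i → i ≤ ℓ → a i = a (ℓ + 1 - i) := by
    intro i h1 h2
    have := hP1a i h1 h2
    rw [zero_add, zero_add] at this
    exact this
  have hA2 : ∀ i, 1 ≤ i → i ≤ p - ℓ → a (ℓ + i) = a (p + 1 - i) := by
    intro i h1 h2
    exact (hP2a i h1 h2).trans (ea _ _ (by omega))
  have hB1 : ∀ i, 1 ≤ i → i ≤ ℓ + 1 → b i = b (ℓ + 2 - i) := by
    intro i h1 h2
    have := hP1b i h1 h2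
    rw [zero_add, zero_add] at this
    exact this.trans (eb _ _ (by omega))
  have hB2 : ∀ i, 1 ≤ i → i ≤ p - ℓ - 1 → b (ℓ + 1 + i) = b (p + 1 - i) := by
    intro i h1 h2
    exact (hP2b i h1 (by omega)).trans (eb _ _ (by omega))
  have hbase : ∀ j, 1 ≤ j → j ≤ p → am j = a (ℓ + 1 + j) ∧ bm j = b (ℓ + 1 + j) := by
    intro j hj1 hjp
    constructor
    · by_cases h1 : j ≤ p - ℓ - 1
      · calc am j = a (p - j) := ham j hj1 (by omega)
          _ = a (p + 1 - (j+1)) := ea _ _ (by omega)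
          _ = a (ℓ + (j+1)) := (hA2 (j+1) (by omega) (by omega)).symm
          _ = a (ℓ + 1 + j) := ea _ _ (by omega)
      · by_cases h2 : j = p - ℓ
        · calc am j = a (p - j) := ham j hj1 (by omega)
            _ = a (ℓ + 1 - 1) := ea _ _ (by omega)
            _ = a 1 := (hA1 1 le_rfl hℓ1).symm
            _ = a (1 + p) := (haper 1 le_rfl).symm
            _ = a (ℓ + 1 + j) := ea _ _ (by omega)
        · by_cases h3 : j ≤ p - 1
          · calc am j = a (p - j) := ham j hj1 h3
              _ = a (ℓ + 1 - (ℓ+1+j-p)) := ea _ _ (by omega)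
              _ = a (ℓ+1+j-p) := (hA1 (ℓ+1+j-p) (by omega) (by omega)).symm
              _ = a ((ℓ+1+j-p) + p) := (haper _ (by omega)).symm
              _ = a (ℓ + 1 + j) := ea _ _ (by omega)
          · have h4 : j = p := by omega
            calc am j = a p := by rw [h4, hamp]
              _ = a (ℓ + (p - ℓ)) := ea _ _ (by omega)
              _ = a (p + 1 - (p - ℓ)) := hA2 (p-ℓ) (by omega) (by omega)
              _ = a (ℓ + 1) := ea _ _ (by omega)
              _ = a ((ℓ+1) + p) := (haper (ℓ+1) (by omega)).symm
              _ = a (ℓ + 1 + j) := ea _ _ (by omega)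
    · by_cases h1 : j ≤ p - ℓ - 1
      · calc bm j = b (p + 1 - j) := hbm j hj1 hjp
          _ = b (ℓ + 1 + j) := (hB2 j hj1 (by omega)).symm
      · calc bm j = b (p + 1 - j) := hbm j hj1 hjp
          _ = b (ℓ + 2 - (ℓ+1+j-p)) := eb _ _ (by omega)
          _ = b (ℓ+1+j-p) := (hB1 (ℓ+1+j-p) (by omega) (by omega)).symm
          _ = b ((ℓ+1+j-p) + p) := (hbper _ (by omega)).symm
          _ = b (ℓ + 1 + j) := eb _ _ (by omega)
  intro j
  induction j using Nat.strong_induction_on with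
  | _ j ih =>
    intro hj1
    by_cases hjp : j ≤ p
    · exact hbase j hj1 hjp
    · have hj' : 1 ≤ j - p := by omega
      obtain ⟨ih1, ih2⟩ := ih (j - p) (by omega) hj'
      constructor
      · calc am j = am ((j - p) + p) := by rw [show (j-p)+p = j by omega]
          _ = am (j - p) := hamper _ hj'
          _ = a (ℓ + 1 + (j - p)) := ih1
          _ = a ((ℓ + 1 + (j - p)) + p) := (haper _ (by omega)).symm
          _ = a (ℓ + 1 + j) := ea _ _ (by omega)
      · calc bm j = bm ((j - p) + p) := by rw [show (j-p)+p = j by omega]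
          _ = bm (j - p) := hbmper _ hj'
          _ = b (ℓ + 1 + (j - p)) := ih2
          _ = b ((ℓ + 1 + (j - p)) + p) := (hbper _ (by omega)).symm
          _ = b (ℓ + 1 + j) := eb _ _ (by omega)


lemma a_bound (a : ℕ → ℝ) (p : ℕ) (hp : 1 ≤ p) (hapos : ∀ j, 1 ≤ j → 0 < a j)
    (haper : ∀ j, 1 ≤ j → a (j + p) = a j) :
    ∀ k, 1 ≤ k → a k ≤ ∑ i ∈ Finset.Icc 1 p, a i := by
  intro k
  induction k using Nat.strong_induction_on with
  | _ k ih =>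
    intro hk
    by_cases hkp : k ≤ p
    · exact Finset.single_le_sum (f := a)
        (fun i hi => (hapos i (Finset.mem_Icc.mp hi).1).le)
        (Finset.mem_Icc.mpr ⟨hk, hkp⟩)
    · have : a k = a (k - p) := by
        rw [← haper (k - p) (by omega)]; congr 1; omega
      rw [this]; exact ih (k - p) (by omega) (by omega)

end RevStrip

open RevStrip in
/-- If the purely periodic coefficients of the discrete m-function `m` are doubly
palindromic with period `p` and first length `ℓ`, and `m⁻` is the discrete m-function
with `p`-periodic coefficients `(a_{p-1}, b_p), (a_{p-2}, b_{p-1}), …, (a_1, b_2), (a_p, b_1)`,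
then `m⁻ = m_{ℓ+1}` on `ℂ₊`, and consequently
`m⁻ = (p_{ℓ+1} m + q_{ℓ+1}) / (-a_{ℓ+1}(p_ℓ m + q_ℓ))` on `ℂ₊`. -/
theorem reversed_is_stripped
    (m mm : ℂ → ℂ) (a b am bm : ℕ → ℝ) (ms mms : ℕ → ℂ → ℂ) (p ℓ : ℕ)
    (hapos : ∀ j, 1 ≤ j → 0 < a j)
    (haper : ∀ j, 1 ≤ j → a (j + p) = a j)
    (hbper : ∀ j, 1 ≤ j → b (j + p) = b j)
    (hdp : DoublyPalindromic a b p ℓ)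
    (hm : IsDiscreteMFunction m) (hcoef : HasJacobiCoeffs m a b ms)
    (hamper : ∀ j, 1 ≤ j → am (j + p) = am j)
    (hbmper : ∀ j, 1 ≤ j → bm (j + p) = bm j)
    (ham : ∀ j, 1 ≤ j → j ≤ p - 1 → am j = a (p - j))
    (hamp : am p = a p)
    (hbm : ∀ j, 1 ≤ j → j ≤ p → bm j = b (p + 1 - j))
    (hmm : IsDiscreteMFunction mm) (hcoefm : HasJacobiCoeffs mm am bm mms) :
    (∀ z : ℂ, 0 < z.im → mm z = ms (ℓ + 1) z) ∧
      ∀ z : ℂ, 0 < z.im →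
        mm z = (firstKind a b (ℓ + 1) z * m z + secondKind a b (ℓ + 1) z) /
          (-(a (ℓ + 1) : ℂ) * (firstKind a b ℓ z * m z + secondKind a b ℓ z)) := by
  obtain ⟨hℓ1, hℓp, hPa1, hPa2, hPb1, hPb2⟩ := hdp
  have hco := coeff_eq a b am bm p ℓ hℓ1 hℓp haper hbper hPa1 hPa2 hPb1 hPb2
    hamper hbmper ham hamp hbm
  -- the shifted coefficient sequences
  set a' : ℕ → ℝ := fun j => a (ℓ + 1 + j) with ha'def
  set b' : ℕ → ℝ := fun j => b (ℓ + 1 + j) with hb'def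
  have hsys2 : HasJacobiCoeffs (ms (ℓ+1)) a' b' (fun n => ms (ℓ+1+n)) :=
    ⟨rfl, fun n => hcoef.2.1 _, fun n z hz => hcoef.2.2 (ℓ+1+n) z hz⟩
  have hcoefm' : HasJacobiCoeffs mm a' b' mms :=
    ⟨hcoefm.1, hcoefm.2.1, fun n z hz => by
      rw [hcoefm.2.2 n z hz, (hco (n+1) (by omega)).1, (hco (n+1) (by omega)).2]⟩
  set S : ℝ := ∑ i ∈ Finset.Icc 1 p, a i with hSdef
  have hp1 : 1 ≤ p := by omega
  have hS : 0 < S := by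
    have h1 := Finset.single_le_sum (f := a)
      (fun i hi => (hapos i (Finset.mem_Icc.mp hi).1).le)
      (Finset.mem_Icc.mpr ⟨le_rfl, hp1⟩)
    exact lt_of_lt_of_le (hapos 1 le_rfl) h1
  have hbound : ∀ j, 1 ≤ j → 0 < a' j ∧ a' j ≤ S := by
    intro j hj
    exact ⟨hapos (ℓ+1+j) (by omega), a_bound a p hp1 hapos haper (ℓ+1+j) (by omega)⟩
  have heq1 : ∀ z : ℂ, 0 < z.im → mm z = ms (ℓ + 1) z :=
    eq_of_same_coeffs mm (ms (ℓ+1)) a' b' mms (fun n => ms (ℓ+1+n))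
      hcoefm' hsys2 S hS hbound
  refine ⟨heq1, fun z hz => ?_⟩
  obtain ⟨hP, hE⟩ := mobius m a b ms hapos hcoef z hz ℓ
  rw [heq1 z hz]
  rw [eq_div_iff (mul_ne_zero (neg_ne_zero.mpr (Complex.ofReal_ne_zero.mpr
    (ne_of_gt (hapos (ℓ+1) (by omega))))) hP)]
  exact hE.symm
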